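/- Suppose k₂ = 0 and 0 < b ≤ 1, with α, β₁, β₂, k₁ ≥ 0. Then for every initial point λ⁰ = (x⁰, u⁰, y⁰, v⁰) ∈ S³ with u⁰ = 0, the sequence of iterates Vⁿ(λ⁰) converges to λ₁ = (1,0,0,0) as n → ∞. -/
import Mathlib


/-- The discrete-time SISI epidemic operator. -/
noncomputable def sisiV (b α β₁ β₂ k₁ k₂ : ℝ) (p : ℝ × ℝ × ℝ × ℝ) : ℝ × ℝ × ℝ × ℝ :=
  (p.1 + b - b * p.1 - β₁ * (k₁ * p.2.1 + k₂ * p.2.2.2) * p.1,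
   p.2.1 - b * p.2.1 - α * p.2.1 + β₁ * (k₁ * p.2.1 + k₂ * p.2.2.2) * p.1,
   p.2.2.1 - b * p.2.2.1 + α * p.2.1 - β₂ * (k₁ * p.2.1 + k₂ * p.2.2.2) * p.2.2.1,
   p.2.2.2 - b * p.2.2.2 + β₂ * (k₁ * p.2.1 + k₂ * p.2.2.2) * p.2.2.1)

/-- The simplex S³ in ℝ⁴. -/
def simplexS3 : Set (ℝ × ℝ × ℝ × ℝ) :=
  {p | 0 ≤ p.1 ∧ 0 ≤ p.2.1 ∧ 0 ≤ p.2.2.1 ∧ 0 ≤ p.2.2.2 ∧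
       p.1 + p.2.1 + p.2.2.1 + p.2.2.2 = 1}

theorem converges_to_lam1_of_u_zero (b α β₁ β₂ k₁ k₂ : ℝ)
    (hk₂ : k₂ = 0) (hb : 0 < b) (hb1 : b ≤ 1)
    (hα : 0 ≤ α) (hβ₁ : 0 ≤ β₁) (hβ₂ : 0 ≤ β₂) (hk₁ : 0 ≤ k₁) :
    ∀ lam0 ∈ simplexS3, lam0.2.1 = 0 →
      Filter.Tendsto (fun n => (sisiV b α β₁ β₂ k₁ k₂)^[n] lam0)
        Filter.atTop (nhds (((1 : ℝ), (0 : ℝ), (0 : ℝ), (0 : ℝ)))) := by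
  intro lam0 _ hu
  obtain ⟨x, u, y, v⟩ := lam0
  simp only at hu
  subst hu hk₂
  have key : ∀ n : ℕ, (sisiV b α β₁ β₂ k₁ 0)^[n] (x, 0, y, v)
      = (1 - (1 - b)^n * (1 - x), 0, (1 - b)^n * y, (1 - b)^n * v) := by
    intro n
    induction n with
    | zero => simp
    | succ n ih =>
      rw [Function.iterate_succ_apply', ih, sisiV]
      simp only [Prod.mk.injEq]
      exact ⟨by ring, by ring, by ring, by ring⟩
  simp only [key]
  have hpow : Filter.Tendsto (fun n : ℕ => (1 - b)^n) Filter.atTop (nhds 0) := by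
    apply tendsto_pow_atTop_nhds_zero_of_lt_one (by linarith) (by linarith)
  have h1 : Filter.Tendsto (fun n : ℕ => 1 - (1 - b)^n * (1 - x)) Filter.atTop (nhds 1) := by
    have := ((hpow.mul_const (1 - x)).const_sub 1)
    simpa using this
  have hy : Filter.Tendsto (fun n : ℕ => (1 - b)^n * y) Filter.atTop (nhds 0) := by
    simpa using hpow.mul_const y
  have hv : Filter.Tendsto (fun n : ℕ => (1 - b)^n * v) Filter.atTop (nhds 0) := by
    simpa using hpow.mul_const v
  exact h1.prodMk_nhds ((tendsto_const_nhds).prodMk_nhds (hy.prodMk_nhds hv))
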